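/- For any simplicial complex X and any p-simplex τ of the r-tupling Dʳ(X), the link of τ in Dʳ(X) is isomorphic to the r-tupling of the link in X of the underlying ((p+1)r−1)-simplex δ(τ): Link_{Dʳ(X)}(τ) ≅ Dʳ(Link_X(δ(τ))). -/
import Mathlib


open CategoryTheory

/-- An abstract simplicial complex on a vertex type `V`: a collection of nonempty
finite subsets of `V` closed under passing to nonempty subsets. -/
structure ASC (V : Type) [DecidableEq V] where
  faces : Set (Finset V)
  nonempty_of_mem : ∀ s ∈ faces, s.Nonempty
  down_closed : ∀ s ∈ faces, ∀ t ⊆ s, t.Nonempty → t ∈ faces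

namespace ASC

variable {V W : Type} [DecidableEq V] [DecidableEq W]

/-- The vertex set of a simplicial complex. -/
def verts (X : ASC V) : Set V := {v | {v} ∈ X.faces}

/-- The full simplex on a (finite) vertex type; `simplexOn (Fin (n+1))` is `Δⁿ`. -/
def simplexOn (V : Type) [DecidableEq V] : ASC V where
  faces := {s | s.Nonempty}
  nonempty_of_mem := fun _ h => h
  down_closed := fun _ _ _ _ h => h

/-- The link of a (possible) simplex `σ`: all faces disjoint from `σ` whose union
with `σ` is again a face. -/
def link (X : ASC V) (σ : Finset V) : ASC V where
  faces := {t | t ∈ X.faces ∧ Disjoint t σ ∧ t ∪ σ ∈ X.faces}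
  nonempty_of_mem := fun s hs => X.nonempty_of_mem s hs.1
  down_closed := by
    rintro s ⟨hs, hd, hu⟩ t hts ht
    refine ⟨X.down_closed s hs t hts ht, hd.mono_left hts, ?_⟩
    exact X.down_closed _ hu _ (Finset.union_subset_union_left hts)
      ⟨ht.choose, Finset.mem_union_left _ ht.choose_spec⟩

/-- The `r`-tupling `Dʳ(X)` of a simplicial complex `X`: vertices are the
`(r-1)`-simplices of `X` (faces with `r` vertices), and a collection of such is a
simplex iff they are pairwise disjoint and their union is a face of `X`. -/
def tupling (X : ASC V) (r : ℕ) : ASC (Finset V) where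
  faces := {S | S.Nonempty ∧ (∀ τ ∈ S, τ ∈ X.faces ∧ τ.card = r) ∧
      ((S : Set (Finset V)).Pairwise Disjoint) ∧ S.biUnion id ∈ X.faces}
  nonempty_of_mem := fun _ h => h.1
  down_closed := by
    rintro S ⟨hS, hmem, hdisj, hun⟩ T hTS hT
    refine ⟨hT, fun τ hτ => hmem τ (hTS hτ), hdisj.mono (by exact_mod_cast hTS), ?_⟩
    refine X.down_closed _ hun _ (Finset.biUnion_subset_biUnion_of_subset_left _ hTS) ?_
    obtain ⟨τ, hτ⟩ := hT
    obtain ⟨v, hv⟩ := X.nonempty_of_mem τ (hmem τ (hTS hτ)).1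
    exact ⟨v, Finset.mem_biUnion.2 ⟨τ, hτ, hv⟩⟩

/-- The double of a simplicial complex. -/
def double (X : ASC V) : ASC (Finset V) := X.tupling 2

/-- The underlying face poset of a simplicial complex, ordered by inclusion. -/
def facePoset (X : ASC V) : Type := {s : Finset V // s ∈ X.faces}

instance (X : ASC V) : PartialOrder X.facePoset :=
  Subtype.partialOrder _

/-- The geometric realization of a simplicial complex, realized as the geometric
realization of the nerve of its face poset (i.e. of its barycentric subdivision). -/
noncomputable def space (X : ASC V) : TopCat :=
  SSet.toTop.obj (nerve X.facePoset)

end ASC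

/-- A topological space is `k`-connected (`k : ℤ`) if it is nonempty (for `k ≥ -1`)
and all its homotopy groups `π_i` for `i ≤ k` are trivial. -/
def IsNConnected (k : ℤ) (T : Type*) [TopologicalSpace T] : Prop :=
  (-1 ≤ k → Nonempty T) ∧
    ∀ (n : ℕ) (x : T), (n : ℤ) ≤ k → Subsingleton (HomotopyGroup (Fin n) T x)

/-- A simplicial complex is weakly Cohen–Macaulay of dimension `n` if it is
`(n-1)`-connected and the link of every `p`-simplex is `(n-p-2)`-connected. -/
def IsWCM {V : Type} [DecidableEq V] (X : ASC V) (n : ℤ) : Prop :=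
  IsNConnected (n - 1) X.space ∧
    ∀ s ∈ X.faces, IsNConnected (n - s.card - 1) (X.link s).space

namespace ASC

variable {V W : Type} [DecidableEq V] [DecidableEq W]

/-- An isomorphism of simplicial complexes: a bijection between the vertex sets
carrying simplices to simplices in both directions. -/
structure Iso (X : ASC V) (Y : ASC W) where
  toEquiv : X.verts ≃ Y.verts
  map_faces : ∀ s : Finset X.verts,
    s.image Subtype.val ∈ X.faces ↔ (s.image toEquiv).image Subtype.val ∈ Y.faces

/-- `X_m`: the order complex of the poset of simplices of `X` with at least `m`
vertices, ordered by inclusion. -/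
def ordered (X : ASC V) (m : ℕ) : ASC (Finset V) where
  faces := {S | S.Nonempty ∧ (∀ s ∈ S, s ∈ X.faces ∧ m ≤ s.card) ∧
      IsChain (· ⊆ ·) (S : Set (Finset V))}
  nonempty_of_mem := fun _ h => h.1
  down_closed := by
    rintro S ⟨hS, hmem, hchain⟩ T hTS hT
    exact ⟨hT, fun s hs => hmem s (hTS hs),
      fun a ha b hb hab => hchain (hTS ha) (hTS hb) hab⟩

/-- The subcomplex of `X_m` consisting of chains of simplices of `X` (with at
least `m` vertices is not imposed here; any predicate `P` cuts out a region). -/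
def regionComplex (X : ASC V) (P : Finset V → Prop) : ASC (Finset V) where
  faces := {S | S.Nonempty ∧ (∀ s ∈ S, s ∈ X.faces ∧ P s) ∧
      IsChain (· ⊆ ·) (S : Set (Finset V))}
  nonempty_of_mem := fun _ h => h.1
  down_closed := by
    rintro S ⟨hS, hmem, hchain⟩ T hTS hT
    exact ⟨hT, fun s hs => hmem s (hTS hs),
      fun a ha b hb hab => hchain (hTS ha) (hTS hb) hab⟩

/-- The join of a finite family of simplicial complexes on a common vertex type:
simplices are the (nonempty) unions of one simplex-or-empty-set from each factor. -/
def joinFam {ι : Type} [Fintype ι] [DecidableEq ι] (Y : ι → ASC V) : ASC V where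
  faces := {s | s.Nonempty ∧ ∃ f : ι → Finset V,
      (∀ i, f i = ∅ ∨ f i ∈ (Y i).faces) ∧ s = Finset.univ.biUnion f}
  nonempty_of_mem := fun _ h => h.1
  down_closed := by
    rintro s ⟨-, f, hf, rfl⟩ t hts ht
    refine ⟨ht, fun i => f i ∩ t, fun i => ?_, ?_⟩
    · by_cases h : (f i ∩ t).Nonempty
      · rcases hf i with h' | h'
        · simp [h'] 
        · exact Or.inr ((Y i).down_closed _ h' _ Finset.inter_subset_left h)
      · exact Or.inl (Finset.not_nonempty_iff_eq_empty.1 h)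
    · ext a
      simp only [Finset.mem_biUnion, Finset.mem_univ, true_and, Finset.mem_inter]
      constructor
      · intro hat
        obtain ⟨i, -, hai⟩ := Finset.mem_biUnion.1 (hts hat)
        exact ⟨i, hai, hat⟩
      · rintro ⟨i, -, hat⟩; exact hat

/-- The boundary `∂Δᵏ` of the `k`-simplex: all nonempty proper subsets of the
`k+1` vertices. -/
def boundary (k : ℕ) : ASC (Fin (k + 1)) where
  faces := {s | s.Nonempty ∧ s ≠ Finset.univ}
  nonempty_of_mem := fun _ h => h.1
  down_closed := by
    rintro s ⟨-, hs⟩ t hts ht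
    refine ⟨ht, fun h => hs ?_⟩
    subst h
    exact Finset.univ_subset_iff.1 hts

end ASC

/-- The matching complex of a simple graph: vertices the edges (as 2-element
vertex sets), simplices the collections of pairwise disjoint edges. -/
def matchingComplex {V : Type} [DecidableEq V] (G : SimpleGraph V) : ASC (Finset V) where
  faces := {S | S.Nonempty ∧ (∀ e ∈ S, ∃ a b, G.Adj a b ∧ e = {a, b}) ∧
      (S : Set (Finset V)).Pairwise Disjoint}
  nonempty_of_mem := fun _ h => h.1
  down_closed := by
    rintro S ⟨hS, hmem, hdisj⟩ T hTS hT
    exact ⟨hT, fun e he => hmem e (hTS he), hdisj.mono (by exact_mod_cast hTS)⟩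

/-- The `r`-hypergraph matching complex `M_m(r)`: vertices the `r`-element
subsets of an `m`-element set, simplices the collections of pairwise disjoint
such subsets. -/
def hypMatching (m r : ℕ) : ASC (Finset (Fin m)) where
  faces := {S | S.Nonempty ∧ (∀ e ∈ S, e.card = r) ∧
      (S : Set (Finset (Fin m))).Pairwise Disjoint}
  nonempty_of_mem := fun _ h => h.1
  down_closed := by
    rintro S ⟨hS, hmem, hdisj⟩ T hTS hT
    exact ⟨hT, fun e he => hmem e (hTS he), hdisj.mono (by exact_mod_cast hTS)⟩

open ASC

lemma ASC.ext' {V : Type} [DecidableEq V] {X Y : ASC V} (h : X.faces = Y.faces) : X = Y := by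
  cases X; cases Y; simpa using h

def ASC.Iso.refl' {V : Type} [DecidableEq V] (X : ASC V) : X.Iso X :=
  ⟨Equiv.refl _, fun s => by simp⟩

theorem statement3 {V : Type} [DecidableEq V] (X : ASC V) (r : ℕ)
    (τ : Finset (Finset V)) (hτ : τ ∈ (X.tupling r).faces) :
    Nonempty (((X.tupling r).link τ).Iso ((X.link (τ.biUnion id)).tupling r)) := by
  obtain ⟨hτne, hτmem, hτdisj, hτun⟩ := hτ
  have hsub : ∀ t ∈ τ, t ⊆ τ.biUnion id := fun t ht =>
    Finset.subset_biUnion_of_mem id ht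
  have key : ((X.tupling r).link τ) = ((X.link (τ.biUnion id)).tupling r) := by
    apply ASC.ext'
    ext S
    constructor
    · rintro ⟨⟨hSne, hSmem, hSdisj, hSun⟩, hSτ, ⟨hUne, hUmem, hUdisj, hUun⟩⟩
      have hdisjδ : ∀ σ ∈ S, Disjoint σ (τ.biUnion id) := by
        intro σ hσ
        rw [Finset.disjoint_biUnion_right]
        intro t ht
        have hne : σ ≠ t := fun h => (Finset.disjoint_left.1 hSτ hσ) (h ▸ ht)
        exact hUdisj (by simp [hσ]) (by simp [ht]) hne
      refine ⟨hSne, fun σ hσ => ⟨⟨(hSmem σ hσ).1, hdisjδ σ hσ, ?_⟩, (hSmem σ hσ).2⟩,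
        hSdisj, ?_, ?_, ?_⟩
      · -- σ ∪ δτ ∈ X.faces
        refine X.down_closed _ hUun _ ?_ ?_
        · intro v hv
          rcases Finset.mem_union.1 hv with hv | hv
          · exact Finset.mem_biUnion.2 ⟨σ, Finset.mem_union_left _ hσ, hv⟩
          · obtain ⟨t, ht, hvt⟩ := Finset.mem_biUnion.1 hv
            exact Finset.mem_biUnion.2 ⟨t, Finset.mem_union_right _ ht, hvt⟩
        · obtain ⟨v, hv⟩ := X.nonempty_of_mem σ (hSmem σ hσ).1
          exact ⟨v, Finset.mem_union_left _ hv⟩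
      · -- S.biUnion id ∈ X.faces
        exact hSun
      · -- Disjoint (S.biUnion id) δτ
        rw [Finset.disjoint_biUnion_left]
        exact fun σ hσ => hdisjδ σ hσ
      · -- S.biUnion id ∪ δτ ∈ X.faces
        have : S.biUnion id ∪ τ.biUnion id = (S ∪ τ).biUnion id := by
          ext v; simp [Finset.mem_union, or_and_right, exists_or]
        rw [this]; exact hUun
    · rintro ⟨hSne, hSmem, hSdisj, hSun, hSdδ, hSuδ⟩
      have hdδ : ∀ σ ∈ S, Disjoint σ (τ.biUnion id) := fun σ hσ => (hSmem σ hσ).1.2.1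
      have hSτ : Disjoint S τ := by
        rw [Finset.disjoint_left]
        intro σ hσ hστ
        obtain ⟨v, hv⟩ := X.nonempty_of_mem σ (hSmem σ hσ).1.1
        exact Finset.disjoint_left.1 (hdδ σ hσ) hv (hsub σ hστ hv)
      refine ⟨⟨hSne, fun σ hσ => ⟨(hSmem σ hσ).1.1, (hSmem σ hσ).2⟩, hSdisj, hSun⟩, hSτ,
        ⟨hSne.mono Finset.subset_union_left, ?_, ?_, ?_⟩⟩
      · intro σ hσ
        rcases Finset.mem_union.1 hσ with h | h
        · exact ⟨(hSmem σ h).1.1, (hSmem σ h).2⟩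
        · exact hτmem σ h
      · intro a ha b hb hab
        rcases Finset.mem_union.1 (Finset.mem_coe.1 ha) with ha' | ha' <;> rcases Finset.mem_union.1 (Finset.mem_coe.1 hb) with hb' | hb'
        all_goals first
          | exact hSdisj ha' hb' hab
          | exact hτdisj ha' hb' hab
          | exact (hdδ a ha').mono_right (hsub b hb')
          | exact ((hdδ b hb').mono_right (hsub a ha')).symm
      · have : (S ∪ τ).biUnion id = S.biUnion id ∪ τ.biUnion id := by
          ext v; simp [Finset.mem_union, or_and_right, exists_or]
        rw [this]; exact hSuδ
  exact ⟨key ▸ ASC.Iso.refl' _⟩
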